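/- Let n be even, and let f: {1,...,n} → {1,...,n} satisfy f(i) = 1 for i ≤ n/2 and f(i) = 2 otherwise. Then the fraction of permutations of {1,...,n} that are f-derangements equals (n/2)²/(n(n-1)), and this fraction tends to 1/4 as n → ∞. -/

import Mathlib

open Filter Finset Equiv

private lemma exists_perm_two {α : Type*} [DecidableEq α] {a b a' b' : α}
    (hab : a ≠ b) (hab' : a' ≠ b') :
    ∃ σ : Equiv.Perm α, σ a' = a ∧ σ b' = b := by
  set c := Equiv.swap a a' b' with hc
  have hca : c ≠ a := by
    intro h
    apply hab'
    have := congrArg (Equiv.swap a a') h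
    simpa [hc, Equiv.swap_apply_left] using this.symm
  refine ⟨Equiv.swap b c * Equiv.swap a a', ?_, ?_⟩
  · simp only [Equiv.Perm.mul_apply, Equiv.swap_apply_right, ← hc]
    exact Equiv.swap_apply_of_ne_of_ne hab (Ne.symm hca)
  · simp only [Equiv.Perm.mul_apply, ← hc, Equiv.swap_apply_right]

private lemma fiber_card_eq {n : ℕ} {a b a' b' : Fin n} (hab : a ≠ b) (hab' : a' ≠ b')
    (x y : Fin n) :
    (Finset.univ.filter fun g : Equiv.Perm (Fin n) => g a = x ∧ g b = y).card
      = (Finset.univ.filter fun g : Equiv.Perm (Fin n) => g a' = x ∧ g b' = y).card := by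
  obtain ⟨σ, hσa, hσb⟩ := exists_perm_two hab hab'
  refine Finset.card_bij' (fun g _ => g * σ) (fun g _ => g * σ⁻¹) ?_ ?_ ?_ ?_
  · intro g hg
    simp only [Finset.mem_filter, Finset.mem_univ, true_and] at hg ⊢
    simp [Equiv.Perm.mul_apply, hσa, hσb, hg.1, hg.2]
  · intro g hg
    simp only [Finset.mem_filter, Finset.mem_univ, true_and] at hg ⊢
    have ha : σ⁻¹ a = a' := by rw [← hσa]; simp
    have hb : σ⁻¹ b = b' := by rw [← hσb]; simp
    constructor
    · rw [Equiv.Perm.mul_apply, ha]; exact hg.1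
    · rw [Equiv.Perm.mul_apply, hb]; exact hg.2
  · intro g _; simp [mul_assoc]
  · intro g _; simp [mul_assoc]

private lemma count_lemma {n : ℕ} (hn : 2 ≤ n) (hev : Even n) (f : Fin n → Fin n)
    (hf0 : ∀ i : Fin n, i.val < n / 2 → f i = ⟨0, Nat.lt_of_lt_of_le Nat.two_pos hn⟩)
    (hf1 : ∀ i : Fin n, n / 2 ≤ i.val → f i = ⟨1, Nat.lt_of_lt_of_le Nat.one_lt_two hn⟩) :
    (Finset.univ.filter fun g : Equiv.Perm (Fin n) => ∀ i, g i ≠ f i).card * (n * (n - 1))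
      = (n / 2) * (n / 2) * Nat.factorial n := by
  set x0 : Fin n := ⟨0, Nat.lt_of_lt_of_le Nat.two_pos hn⟩ with hx0
  set x1 : Fin n := ⟨1, Nat.lt_of_lt_of_le Nat.one_lt_two hn⟩ with hx1
  have hx01 : x0 ≠ x1 := by simp [hx0, hx1, Fin.ext_iff]
  set ρ : Equiv.Perm (Fin n) → Fin n × Fin n := fun g => (g.symm x0, g.symm x1) with hρ
  set c := (Finset.univ.filter fun g : Equiv.Perm (Fin n) => g x0 = x0 ∧ g x1 = x1).card with hc
  -- fibers all have card c
  have hfib : ∀ p : Fin n × Fin n, p.1 ≠ p.2 →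
      (Finset.univ.filter fun g : Equiv.Perm (Fin n) => ρ g = p).card = c := by
    intro p hp
    have : (Finset.univ.filter fun g : Equiv.Perm (Fin n) => ρ g = p)
        = Finset.univ.filter fun g => g p.1 = x0 ∧ g p.2 = x1 := by
      apply Finset.filter_congr
      intro g _
      simp only [hρ, Prod.ext_iff, Equiv.symm_apply_eq]
      constructor <;> (rintro ⟨h1, h2⟩; exact ⟨h1.symm, h2.symm⟩)
    rw [this, hc]
    exact fiber_card_eq hp hx01 x0 x1
  -- total count
  have htot : Nat.factorial n = n * (n - 1) * c := by
    have h1 : (Finset.univ : Finset (Equiv.Perm (Fin n))).card = Nat.factorial n := by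
      rw [Finset.card_univ, Fintype.card_perm, Fintype.card_fin]
    have h2 := Finset.card_eq_sum_card_fiberwise (f := ρ)
      (s := (Finset.univ : Finset (Equiv.Perm (Fin n)))) (t := Finset.univ.offDiag)
      (fun g _ => by
        simp only [Finset.mem_coe, Finset.mem_offDiag, Finset.mem_univ, true_and, hρ]
        exact fun h => hx01 (g.symm.injective h))
    rw [h1] at h2
    rw [h2]
    rw [Finset.sum_congr rfl (fun p hp => hfib p (by
      simp only [Finset.mem_offDiag, Finset.mem_univ, true_and] at hp
      exact hp))]
    rw [Finset.sum_const, Finset.offDiag_card, Finset.card_univ, Fintype.card_fin, smul_eq_mul,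
      Nat.mul_sub, mul_one]
  -- halves
  set T : Finset (Fin n × Fin n) :=
    (Finset.univ.filter fun a : Fin n => n / 2 ≤ a.val) ×ˢ
      (Finset.univ.filter fun a : Fin n => a.val < n / 2) with hT
  have hTmem : ∀ p : Fin n × Fin n, p ∈ T ↔ n / 2 ≤ p.1.val ∧ p.2.val < n / 2 := by
    intro p; simp [hT, Finset.mem_product]
  have hTcard : T.card = (n / 2) * (n / 2) := by
    rw [hT, Finset.card_product]
    have hlow : (Finset.univ.filter fun a : Fin n => a.val < n / 2)
        = Finset.Iio (⟨n / 2, by omega⟩ : Fin n) := by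
      ext a; simp [Fin.lt_def]
    have h1 : (Finset.univ.filter fun a : Fin n => a.val < n / 2).card = n / 2 := by
      rw [hlow, Fin.card_Iio]
    have h2 : (Finset.univ.filter fun a : Fin n => n / 2 ≤ a.val)
        = Finset.univ.filter fun a : Fin n => ¬ a.val < n / 2 := by
      apply Finset.filter_congr; intro a _; simp [not_lt]
    have h3 := Finset.card_filter_add_card_filter_not
      (s := (Finset.univ : Finset (Fin n))) (p := fun a : Fin n => a.val < n / 2)
    rw [Finset.card_univ, Fintype.card_fin] at h3
    obtain ⟨k, hk⟩ := hev
    have h4 : (Finset.univ.filter fun a : Fin n => ¬ a.val < n / 2).card = n / 2 := by omega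
    rw [h1, h2, h4]
  -- the derangement set
  have hcond : (Finset.univ.filter fun g : Equiv.Perm (Fin n) => ∀ i, g i ≠ f i)
      = Finset.univ.filter fun g => ρ g ∈ T := by
    apply Finset.filter_congr; intro g _
    simp only [hTmem, hρ, eq_iff_iff]
    constructor
    · intro h
      constructor
      · by_contra hlt; push_neg at hlt
        exact h (g.symm x0) (by rw [Equiv.apply_symm_apply, hf0 _ hlt])
      · by_contra hge; push_neg at hge
        exact h (g.symm x1) (by rw [Equiv.apply_symm_apply, hf1 _ hge])
    · rintro ⟨h0, h1⟩ i hi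
      by_cases hlt : i.val < n / 2
      · rw [hf0 i hlt] at hi
        have hi2 : i = g.symm x0 := by rw [← hi]; simp
        rw [hi2] at hlt; omega
      · push_neg at hlt
        rw [hf1 i hlt] at hi
        have hi2 : i = g.symm x1 := by rw [← hi]; simp
        rw [hi2] at hlt; omega
  have hD : (Finset.univ.filter fun g : Equiv.Perm (Fin n) => ∀ i, g i ≠ f i).card
      = (n / 2) * (n / 2) * c := by
    rw [hcond]
    rw [Finset.card_eq_sum_card_fiberwise (f := ρ) (t := T)
      (s := Finset.univ.filter fun g : Equiv.Perm (Fin n) => ρ g ∈ T)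
      (fun g hg => Finset.mem_coe.mpr (Finset.mem_filter.mp (Finset.mem_coe.mp hg)).2)]
    have hstep : ∀ p ∈ T,
        ((Finset.univ.filter fun g : Equiv.Perm (Fin n) => ρ g ∈ T).filter
          fun g => ρ g = p).card = c := by
      intro p hp
      have he : ((Finset.univ.filter fun g : Equiv.Perm (Fin n) => ρ g ∈ T).filter
          fun g => ρ g = p) = Finset.univ.filter fun g => ρ g = p := by
        ext g
        simp only [Finset.mem_filter, Finset.mem_univ, true_and]
        exact ⟨fun h => h.2, fun h => ⟨h ▸ hp, h⟩⟩
      rw [he]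
      refine hfib p fun hpe => ?_
      rw [hTmem] at hp
      rw [hpe] at hp
      omega
    rw [Finset.sum_congr rfl hstep, Finset.sum_const, smul_eq_mul, hTcard]
  rw [hD, htot]
  ring




/-- For n even with f(i)=1 on the first half and f(i)=2 on the second half, the
fraction of permutations that are f-derangements equals (n/2)²/(n(n-1)), and this
fraction tends to 1/4 as n → ∞. -/
theorem stmt_3 :
    (∀ (n : ℕ) (hn : 2 ≤ n), Even n → ∀ f : Fin n → Fin n,
      (∀ i : Fin n, i.val < n / 2 → f i = ⟨0, by omega⟩) →
      (∀ i : Fin n, n / 2 ≤ i.val → f i = ⟨1, by omega⟩) →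
      ((Finset.univ.filter fun g : Equiv.Perm (Fin n) => ∀ i, g i ≠ f i).card : ℝ)
          / (Nat.factorial n)
        = ((n : ℝ) / 2) ^ 2 / ((n : ℝ) * ((n : ℝ) - 1)))
    ∧ Tendsto (fun n : ℕ => ((n : ℝ) / 2) ^ 2 / ((n : ℝ) * ((n : ℝ) - 1)))
        atTop (nhds (1 / 4)) := by
  constructor
  · intro n hn hev f hf0 hf1
    have key := count_lemma hn hev f hf0 hf1
    have key' : (Finset.univ.filter fun g : Equiv.Perm (Fin n) => ∀ i, g i ≠ f i).card
        * (n * (n - 1)) = (n / 2) ^ 2 * Nat.factorial n := by rw [pow_two]; exact key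
    have hnR : (2 : ℝ) ≤ (n : ℝ) := by exact_mod_cast hn
    have h2 : ((n / 2 : ℕ) : ℝ) = (n : ℝ) / 2 := by
      obtain ⟨k, hk⟩ := hev
      subst hk
      rw [show (k + k) / 2 = k from by omega]
      push_cast; ring
    have hn1 : ((n - 1 : ℕ) : ℝ) = (n : ℝ) - 1 := by
      push_cast [Nat.cast_sub (by omega : 1 ≤ n)]; ring
    rw [div_eq_div_iff (by exact_mod_cast Nat.factorial_pos n : (0:ℝ) < Nat.factorial n).ne'
      (by nlinarith : ((n:ℝ) * ((n:ℝ) - 1)) ≠ 0).symm.symm]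
    rw [← h2, ← hn1]
    exact_mod_cast key'
  · have h1 : Tendsto (fun n : ℕ => 1 - 1 / (n : ℝ)) atTop (nhds 1) := by
      simpa using (tendsto_const_nhds (x := (1:ℝ)) (f := atTop)).sub
        tendsto_one_div_atTop_nhds_zero_nat
    have h2 : Tendsto (fun n : ℕ => (1/4 : ℝ) / (1 - 1 / (n : ℝ))) atTop (nhds ((1/4) / 1)) :=
      Tendsto.div tendsto_const_nhds h1 one_ne_zero
    rw [div_one] at h2
    refine h2.congr' ?_
    filter_upwards [eventually_ge_atTop 2] with n hn
    have hnR : (2 : ℝ) ≤ (n : ℝ) := by exact_mod_cast hn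
    have hne : (n : ℝ) ≠ 0 := by nlinarith
    have hne1 : (n : ℝ) - 1 ≠ 0 := by nlinarith
    field_simp
    ring
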